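/- Fix d ≥ 2, 0 < p⋆ ≤ 1/(2(d+1)), and η ∈ Δ_d. Define π on [d+1] by π(i) = (p(i) + p⋆·η(i))/(1 + p⋆) for i ∈ [d] and π(d+1) = p⋆/(1 + p⋆). Then π is a probability distribution satisfying π·M_η = π (i.e., π is stationary for M_η), and moreover min_{j∈[d+1]} π(j) = π(d+1). -/

import Mathlib

open Finset

noncomputable section

/-- A row-stochastic matrix. -/
def IsStochastic {d : ℕ} (M : Matrix (Fin d) (Fin d) ℝ) : Prop :=
  (∀ i j, 0 ≤ M i j) ∧ ∀ i, ∑ j, M i j = 1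

/-- A probability distribution on `Fin d`. -/
def IsDist {d : ℕ} (μ : Fin d → ℝ) : Prop :=
  (∀ i, 0 ≤ μ i) ∧ ∑ i, μ i = 1

/-- Probability of a length-`m` trajectory under the Markov chain `(M, μ)`:
`μ(x₁) ∏_{t=1}^{m-1} M(x_t, x_{t+1})`. -/
def trajP {d m : ℕ} (M : Matrix (Fin d) (Fin d) ℝ) (μ : Fin d → ℝ)
    (x : Fin m → Fin d) : ℝ :=
  (if h : 0 < m then μ (x ⟨0, h⟩) else 1) *
    ∏ t : Fin (m - 1),
      M (x ⟨t.1, by have h2 := t.2; omega⟩) (x ⟨t.1 + 1, by have h2 := t.2; omega⟩)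


/-- The distribution `p` on `[d+1]`: `p(d+1) = p⋆`, `p(i) = (1-p⋆)/d` for `i ∈ [d]`. -/
def pInit (d : ℕ) (ps : ℝ) : Fin (d + 1) → ℝ :=
  fun i => if i.1 = d then ps else (1 - ps) / d

/-- The chain `M_η ∈ G_{p⋆}`: rows `1,…,d` equal `p`, row `d+1` is `(η(1),…,η(d),0)`. -/
def MG (d : ℕ) (ps : ℝ) (η : Fin d → ℝ) : Matrix (Fin (d + 1)) (Fin (d + 1)) ℝ :=
  Matrix.of fun i j =>
    if i.1 = d then (if h : j.1 = d then 0 else η ⟨j.1, by have h2 := j.2; omega⟩)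
    else pInit d ps j

/-- Number of visits to state `d+1` in a trajectory. -/
def Nlast (d m : ℕ) (x : Fin m → Fin (d + 1)) : ℕ :=
  (Finset.univ.filter (fun t => (x t).1 = d)).card

/-- The stationary distribution of `M_η ∈ G_{p⋆}`:
`π(i) = (p(i) + p⋆ η(i))/(1 + p⋆)` for `i ∈ [d]` and `π(d+1) = p⋆/(1 + p⋆)`;
it is a probability distribution, satisfies `π M_η = π`, and attains its minimum
at state `d+1`. -/
theorem stationary_distribution_of_G
    (d : ℕ) (hd : 2 ≤ d) (ps : ℝ) (hps : 0 < ps) (hps2 : ps ≤ 1 / (2 * ((d : ℝ) + 1)))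
    (η : Fin d → ℝ) (hη : IsDist η)
    (π : Fin (d + 1) → ℝ)
    (hπ : ∀ i : Fin (d + 1),
      π i = if h : i.1 = d then ps / (1 + ps)
            else (pInit d ps i + ps * η ⟨i.1, by have h2 := i.2; omega⟩) / (1 + ps)) :
    IsDist π ∧ (∀ j, ∑ i, π i * MG d ps η i j = π j) ∧
      ∀ j, π ⟨d, Nat.lt_succ_self d⟩ ≤ π j := by

  have hd0 : (0:ℝ) < d := by exact_mod_cast Nat.lt_of_lt_of_le (by norm_num) hd
  have h1ps : (0:ℝ) < 1 + ps := by linarith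
  obtain ⟨hη0, hη1⟩ := hη
  have hlast : π (Fin.last d) = ps / (1 + ps) := by
    rw [hπ]; simp [Fin.last]
  have hcast : ∀ i : Fin d, π i.castSucc = ((1 - ps)/d + ps * η i) / (1 + ps) := by
    intro i
    have hne : (i.castSucc).1 ≠ d := by have := i.2; simp [Fin.castSucc]; omega
    rw [hπ, dif_neg hne]
    have hne2 : (i:ℕ) ≠ d := by have := i.2; omega
    simp [pInit, hne2]
  have hsumcast : ∑ i : Fin d, π i.castSucc = 1 / (1 + ps) := by
    simp only [hcast]
    rw [← Finset.sum_div, Finset.sum_add_distrib, Finset.sum_const,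
      ← Finset.mul_sum, hη1]
    simp
    field_simp
    ring
  have hsum1 : ∑ i, π i = 1 := by
    rw [Fin.sum_univ_castSucc, hsumcast, hlast]
    field_simp
  have hnonneg : ∀ i, 0 ≤ π i := by
    intro i
    rw [hπ]
    split
    · positivity
    · next h =>
      have h1 : 0 ≤ pInit d ps i := by
        simp only [pInit, if_neg h]
        have : ps ≤ 1 := le_trans hps2 (by rw [div_le_one (by positivity)]; nlinarith)
        exact div_nonneg (by linarith) hd0.le
      have h2 : 0 ≤ η ⟨i.1, by have := i.2; omega⟩ := hη0 _
      positivity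
  refine ⟨⟨hnonneg, hsum1⟩, ?_, ?_⟩
  · intro j
    have hMcast : ∀ i : Fin d, MG d ps η i.castSucc j = pInit d ps j := by
      intro i
      have hne2 : (i:ℕ) ≠ d := by have := i.2; omega
      simp [MG, hne2]
    rw [Fin.sum_univ_castSucc]
    simp only [hMcast]
    rw [← Finset.sum_mul, hsumcast, hlast]
    by_cases hj : j.1 = d
    · have : MG d ps η (Fin.last d) j = 0 := by simp [MG, Fin.last, hj]
      rw [this, hπ j, dif_pos hj]
      simp only [pInit, if_pos hj]
      field_simp
      norm_num
    · have : MG d ps η (Fin.last d) j = η ⟨j.1, by have := j.2; omega⟩ := by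
        simp [MG, Fin.last, hj]
      rw [this, hπ j, dif_neg hj]
      simp only [pInit, if_neg hj]
      field_simp
  · intro j
    have hπd : π ⟨d, Nat.lt_succ_self d⟩ = ps / (1 + ps) := by rw [hπ]; simp
    rw [hπd, hπ j]
    split
    · next h => exact le_refl _
    · next h =>
      have h2 : 0 ≤ η ⟨j.1, by have := j.2; omega⟩ := hη0 _
      have hkey : ps ≤ (1 - ps)/d := by
        rw [le_div_iff₀ hd0]
        rw [le_div_iff₀ (by positivity)] at hps2
        nlinarith
      have : pInit d ps j = (1 - ps)/d := by simp [pInit, h]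
      rw [this]
      apply (div_le_div_iff_of_pos_right h1ps).mpr
      nlinarith


end
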